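/- If an ontological model of M is not maximally ψ-epistemic, witnessed by states ψ, φ with ∫_{Λ_φ} μ_ψ dλ < |⟨φ|ψ⟩|², and if P contains states ψ⊥, φ⊥ orthogonal to ψ, φ respectively within the two-dimensional span of ψ and φ, then the model is preparation contextual: the mixtures μ₁ = ½(μ_ψ + μ_{ψ⊥}) and μ₂ = ½(μ_φ + μ_{φ⊥}), which correspond to the same density operator ½Π, are distinct (their supports differ by a set of positive measure). -/

import Mathlib

open MeasureTheory

/-- If an ontological model of `Ms` is not maximally ψ-epistemic, witnessed by
`ψ, φ ∈ P` with `∫_{Λ_φ} μ_ψ < |⟨φ|ψ⟩|²`, and if `P` contains states `ψ⊥, φ⊥` orthogonal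
to `ψ, φ` respectively within the 2D span of `ψ` and `φ` (so that the two 50/50 ensembles
have the same density operator `½Π`), then the model is preparation contextual: the mixed
distributions `½(μ_ψ + μ_{ψ⊥})` and `½(μ_φ + μ_{φ⊥})` are not equal `ν`-a.e.; indeed their
supports differ by a set of positive measure. -/
theorem not_maximally_epistemic_preparation_contextual
    {Λ State Basis : Type*} [MeasurableSpace Λ] (ν : Measure Λ)
    (P : Set State) (Ms : Set Basis) (memB : State → Basis → Prop)
    (μ : State → Λ → ℝ) (ξ : Basis → State → Λ → ℝ)
    (Q : State → State → ℝ)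
    (hμnonneg : ∀ ψ ∈ P, ∀ l, 0 ≤ μ ψ l)
    (hμprob : ∀ ψ ∈ P, ∫ l, μ ψ l ∂ν = 1)
    (hμmeas : ∀ ψ ∈ P, Measurable (μ ψ))
    (hξnonneg : ∀ M ∈ Ms, ∀ α, memB α M → ∀ l, 0 ≤ ξ M α l)
    (hξle : ∀ M ∈ Ms, ∀ α, memB α M → ∀ l, ξ M α l ≤ 1)
    (hξmeas : ∀ M ∈ Ms, ∀ α, memB α M → Measurable (ξ M α))
    (born : ∀ ψ ∈ P, ∀ M ∈ Ms, ∀ α, memB α M →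
      ∫ l, ξ M α l * μ ψ l ∂ν = Q α ψ)
    (hξone : ∀ M ∈ Ms, ∀ φ, memB φ M → ∀ᵐ l ∂ν, 0 < μ φ l → ξ M φ l = 1)
    (ψ φ ψp φp : State) (hψ : ψ ∈ P) (hφ : φ ∈ P) (hψp : ψp ∈ P) (hφp : φp ∈ P)
    -- a basis containing both `φ` and `φ⊥`
    (M : Basis) (hM : M ∈ Ms) (hmemφ : memB φ M) (hmemφp : memB φp M)
    -- orthogonality within the 2D span: `|⟨ψ⊥|ψ⟩|² = 0 = |⟨φ⊥|φ⟩|²`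
    (horthψ : Q ψp ψ = 0) (horthφ : Q φp φ = 0) (horthφ' : Q φ φp = 0)
    -- not maximally ψ-epistemic at `(ψ, φ)`
    (hlt : ∫ l in {l | 0 < μ φ l}, μ ψ l ∂ν < Q φ ψ) :
    ¬ ((fun l => (μ ψ l + μ ψp l) / 2) =ᵐ[ν] fun l => (μ φ l + μ φp l) / 2) ∧
    0 < ν ({l | 0 < (μ ψ l + μ ψp l) / 2} \ {l | 0 < (μ φ l + μ φp l) / 2}) := by

  have hnψ := hμnonneg ψ hψ
  have hnφ := hμnonneg φ hφ
  have hnψp := hμnonneg ψp hψp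
  have hnφp := hμnonneg φp hφp
  have hnξ := hξnonneg M hM φ hmemφ
  have hξ1 := hξle M hM φ hmemφ
  have hmφ := hμmeas φ hφ
  have hmξ := hξmeas M hM φ hmemφ
  have integ : ∀ α ∈ P, Integrable (μ α) ν := by
    intro α hα
    by_contra h
    have h1 := hμprob α hα
    rw [integral_undef h] at h1
    norm_num at h1
  have intξ : ∀ α ∈ P, Integrable (fun l => ξ M φ l * μ α l) ν := by
    intro α hα
    refine (integ α hα).mono' ((hmξ.mul (hμmeas α hα)).aestronglyMeasurable) ?_
    filter_upwards with l
    rw [Real.norm_eq_abs, abs_of_nonneg (mul_nonneg (hnξ l) (hμnonneg α hα l))]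
    exact mul_le_of_le_one_left (hμnonneg α hα l) (hξ1 l)
  have hzero : ∀ᵐ l ∂ν, ξ M φ l * μ φp l = 0 := by
    have hb := born φp hφp M hM φ hmemφ
    rw [horthφ'] at hb
    have h0 := (integral_eq_zero_iff_of_nonneg
      (fun l => mul_nonneg (hnξ l) (hnφp l)) (intξ φp hφp)).mp hb
    filter_upwards [h0] with l hl using hl
  have hs : MeasurableSet {l | 0 < μ φ l} := measurableSet_lt measurable_const hmφ
  have heq : ∫ l in {l | 0 < μ φ l}, ξ M φ l * μ ψ l ∂ν
      = ∫ l in {l | 0 < μ φ l}, μ ψ l ∂ν := by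
    refine setIntegral_congr_ae hs ?_
    filter_upwards [hξone M hM φ hmemφ] with l h1 hl
    rw [h1 hl, one_mul]
  have hpos : 0 < ν ({l | 0 < (μ ψ l + μ ψp l) / 2} \ {l | 0 < (μ φ l + μ φp l) / 2}) := by
    by_contra hc
    push_neg at hc
    have hB0 : ν ({l | 0 < (μ ψ l + μ ψp l) / 2} \ {l | 0 < (μ φ l + μ φp l) / 2}) = 0 :=
      le_antisymm hc (zero_le)
    have hae : ∀ᵐ l ∂ν,
        l ∉ ({l | 0 < (μ ψ l + μ ψp l) / 2} \ {l | 0 < (μ φ l + μ φp l) / 2}) :=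
      measure_eq_zero_iff_ae_notMem.mp hB0
    have hker : ∀ᵐ l ∂ν, μ φ l ≤ 0 → ξ M φ l * μ ψ l = 0 := by
      filter_upwards [hae, hzero] with l hl hz hφ0
      by_contra hne
      have hprod : 0 < ξ M φ l * μ ψ l :=
        lt_of_le_of_ne (mul_nonneg (hnξ l) (hnψ l)) (Ne.symm hne)
      rcases mul_pos_iff.mp hprod with ⟨hξpos, hψpos⟩ | ⟨h1, _⟩
      · have hfl : 0 < (μ ψ l + μ ψp l) / 2 := by
          have := hnψp l; linarith
        have hgl : 0 < (μ φ l + μ φp l) / 2 := by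
          by_contra hg
          exact hl ⟨hfl, hg⟩
        have hφppos : 0 < μ φp l := by linarith
        nlinarith
      · exact absurd h1 (not_lt.mpr (hnξ l))
    have hc0 : ∫ l in {l | 0 < μ φ l}ᶜ, ξ M φ l * μ ψ l ∂ν = 0 := by
      calc ∫ l in {l | 0 < μ φ l}ᶜ, ξ M φ l * μ ψ l ∂ν
          = ∫ l in {l | 0 < μ φ l}ᶜ, (0:ℝ) ∂ν := by
            refine setIntegral_congr_ae hs.compl ?_
            filter_upwards [hker] with l h hl
            exact h (not_lt.mp hl)
        _ = 0 := by simp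
    have hsplit := integral_add_compl hs (intξ ψ hψ)
    have hb := born ψ hψ M hM φ hmemφ
    linarith
  refine ⟨?_, hpos⟩
  intro haeq
  have hsub : ({l | 0 < (μ ψ l + μ ψp l) / 2} \ {l | 0 < (μ φ l + μ φp l) / 2})
      ⊆ {l | ¬ (μ ψ l + μ ψp l) / 2 = (μ φ l + μ φp l) / 2} := by
    rintro l ⟨h1, h2⟩ he
    exact h2 (by rw [Set.mem_setOf_eq, ← he]; exact h1)
  have h0 : ν ({l | 0 < (μ ψ l + μ ψp l) / 2} \ {l | 0 < (μ φ l + μ φp l) / 2}) = 0 :=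
    measure_mono_null hsub (ae_iff.mp haeq)
  rw [h0] at hpos
  exact lt_irrefl _ hpos
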